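/- Let a < b be real numbers and let f, g be real functions that are continuous on [a,b) and continuously differentiable on (a,b), with f(a) = g(a) = 0 and g(x)·g'(x) > 0 for all x ∈ (a,b). If the function x ↦ f'(x)/g'(x) is decreasing on (a,b), then f(x)/g(x) > f'(x)/g'(x) for every x ∈ (a,b). -/
import Mathlib

theorem monotone_lhopital_rule (a b : ℝ) (hab : a < b) (f g f' g' : ℝ → ℝ)
    (hfc : ContinuousOn f (Set.Ico a b)) (hgc : ContinuousOn g (Set.Ico a b))
    (hf : ∀ x ∈ Set.Ioo a b, HasDerivAt f (f' x) x)
    (hg : ∀ x ∈ Set.Ioo a b, HasDerivAt g (g' x) x)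
    (hf'c : ContinuousOn f' (Set.Ioo a b)) (hg'c : ContinuousOn g' (Set.Ioo a b))
    (hfa : f a = 0) (hga : g a = 0)
    (hgg' : ∀ x ∈ Set.Ioo a b, 0 < g x * g' x)
    (hdec : StrictAntiOn (fun x => f' x / g' x) (Set.Ioo a b)) :
    ∀ x ∈ Set.Ioo a b, f' x / g' x < f x / g x := by
  intro x hx
  obtain ⟨hax, hxb⟩ := hx
  have hsub : Set.Icc a x ⊆ Set.Ico a b := Set.Icc_subset_Ico_right hxb
  have hsub' : Set.Ioo a x ⊆ Set.Ioo a b := Set.Ioo_subset_Ioo_right hxb.le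
  obtain ⟨c, hc, hcv⟩ := exists_ratio_hasDerivAt_eq_ratio_slope f f' hax
    (hfc.mono hsub) (fun y hy => hf y (hsub' hy)) g g' (hgc.mono hsub)
    (fun y hy => hg y (hsub' hy))
  have hcab : c ∈ Set.Ioo a b := hsub' hc
  have hg'c : g' c ≠ 0 := right_ne_zero_of_mul (ne_of_gt (hgg' c hcab))
  have hgx : g x ≠ 0 := left_ne_zero_of_mul (ne_of_gt (hgg' x ⟨hax, hxb⟩))
  rw [hfa, hga, sub_zero, sub_zero] at hcv
  have key : f x / g x = f' c / g' c := by
    rw [div_eq_div_iff hgx hg'c]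
    linarith [hcv]
  rw [key]
  exact hdec hcab ⟨hax, hxb⟩ hc.2
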